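/- If the solution set S of SEP(f,g,C,Q) is nonempty and compact and the Hausdorff distance H(S(ε), S) → 0 as ε → 0⁺, then every generalized approximating sequence corresponding to any sequence {pₙ} ⊆ M with pₙ → p* has a subsequence converging to some element of S; in particular, SEP(f,g,C,Q) is Levitin–Polyak well-posed by perturbations in the generalized sense. -/

import Mathlib

open Filter Metric Topology Set

/-- The solution set of the split equilibrium problem SEP(f,g,C,Q). -/
def SEPSol {E₁ E₂ : Type*} [NormedAddCommGroup E₁] [NormedSpace ℝ E₁]
    [NormedAddCommGroup E₂] [NormedSpace ℝ E₂]
    (C : Set E₁) (Q : Set E₂) (A : E₁ →L[ℝ] E₂)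
    (f : E₁ → E₁ → ℝ) (g : E₂ → E₂ → ℝ) : Set (E₁ × E₂) :=
  {u | u.1 ∈ C ∧ u.2 ∈ Q ∧ u.2 = A u.1 ∧
    (∀ x ∈ C, 0 ≤ f u.1 x) ∧ (∀ y ∈ Q, 0 ≤ g u.2 y)}

/-- The approximate solution set S(ε) of the perturbed split equilibrium problem,
where the perturbation parameter ranges over the closed ball M of radius `r`
centered at `pstar`, intersected with the closed ball of radius `ε` around `pstar`. -/
def approxSol {E₁ E₂ N : Type*} [NormedAddCommGroup E₁] [NormedSpace ℝ E₁]
    [NormedAddCommGroup E₂] [NormedSpace ℝ E₂] [NormedAddCommGroup N] [NormedSpace ℝ N]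
    (C : Set E₁) (Q : Set E₂) (A : E₁ →L[ℝ] E₂) (pstar : N) (r : ℝ)
    (ft : N → E₁ → E₁ → ℝ) (gt : N → E₂ → E₂ → ℝ) (ε : ℝ) : Set (E₁ × E₂) :=
  {u | ∃ p : N, ‖p - pstar‖ ≤ r ∧ ‖p - pstar‖ ≤ ε ∧
    infDist u.1 C ≤ ε ∧ infDist u.2 Q ≤ ε ∧ ‖u.2 - A u.1‖ ≤ ε ∧
    (∀ x ∈ C, -ε ≤ ft p u.1 x) ∧ (∀ y ∈ Q, -ε ≤ gt p u.2 y)}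

/-- `u` is a generalized approximating sequence corresponding to the parameter
sequence `p` (which lies in the ball M of radius `r` around `pstar` and converges
to `pstar`) for the split equilibrium problem. -/
def GenApproxSeq {E₁ E₂ N : Type*} [NormedAddCommGroup E₁] [NormedSpace ℝ E₁]
    [NormedAddCommGroup E₂] [NormedSpace ℝ E₂] [NormedAddCommGroup N] [NormedSpace ℝ N]
    (C : Set E₁) (Q : Set E₂) (A : E₁ →L[ℝ] E₂) (pstar : N) (r : ℝ)
    (ft : N → E₁ → E₁ → ℝ) (gt : N → E₂ → E₂ → ℝ)
    (p : ℕ → N) (u : ℕ → E₁ × E₂) : Prop :=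
  (∀ n, ‖p n - pstar‖ ≤ r) ∧ Tendsto p atTop (nhds pstar) ∧
  ∃ ε : ℕ → ℝ, (∀ n, 0 < ε n) ∧ Tendsto ε atTop (nhds 0) ∧
    ∀ n, infDist (u n).1 C ≤ ε n ∧ infDist (u n).2 Q ≤ ε n ∧
      ‖(u n).2 - A (u n).1‖ ≤ ε n ∧
      (∀ x ∈ C, -(ε n) ≤ ft (p n) (u n).1 x) ∧
      (∀ y ∈ Q, -(ε n) ≤ gt (p n) (u n).2 y)

/-- SEP(f,g,C,Q) is Levitin–Polyak well-posed by perturbations: the solution set is a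
singleton and every generalized approximating sequence converges to the unique solution. -/
def LPWellPosedPerturb {E₁ E₂ N : Type*} [NormedAddCommGroup E₁] [NormedSpace ℝ E₁]
    [NormedAddCommGroup E₂] [NormedSpace ℝ E₂] [NormedAddCommGroup N] [NormedSpace ℝ N]
    (C : Set E₁) (Q : Set E₂) (A : E₁ →L[ℝ] E₂) (pstar : N) (r : ℝ)
    (ft : N → E₁ → E₁ → ℝ) (gt : N → E₂ → E₂ → ℝ) : Prop :=
  ∃ ustar : E₁ × E₂, SEPSol C Q A (ft pstar) (gt pstar) = {ustar} ∧
    ∀ (p : ℕ → N) (u : ℕ → E₁ × E₂), GenApproxSeq C Q A pstar r ft gt p u →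
      Tendsto u atTop (nhds ustar)

/-- SEP(f,g,C,Q) is Levitin–Polyak well-posed by perturbations in the generalized sense:
the solution set is nonempty and every generalized approximating sequence has a
subsequence converging to some solution. -/
def GenLPWellPosedPerturb {E₁ E₂ N : Type*} [NormedAddCommGroup E₁] [NormedSpace ℝ E₁]
    [NormedAddCommGroup E₂] [NormedSpace ℝ E₂] [NormedAddCommGroup N] [NormedSpace ℝ N]
    (C : Set E₁) (Q : Set E₂) (A : E₁ →L[ℝ] E₂) (pstar : N) (r : ℝ)
    (ft : N → E₁ → E₁ → ℝ) (gt : N → E₂ → E₂ → ℝ) : Prop :=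
  (SEPSol C Q A (ft pstar) (gt pstar)).Nonempty ∧
    ∀ (p : ℕ → N) (u : ℕ → E₁ × E₂), GenApproxSeq C Q A pstar r ft gt p u →
      ∃ ustar ∈ SEPSol C Q A (ft pstar) (gt pstar), ∃ φ : ℕ → ℕ, StrictMono φ ∧
        Tendsto (u ∘ φ) atTop (nhds ustar)

/-- The Kuratowski measure of noncompactness: the infimum of all `ε > 0` such that the
set can be covered by finitely many sets, each of diameter `< ε`. -/
noncomputable def kuratowskiMNC {X : Type*} [PseudoEMetricSpace X] (s : Set X) : ENNReal :=
  sInf {ε : ENNReal | 0 < ε ∧ ∃ t : Finset (Set X), (s ⊆ ⋃ a ∈ t, (a : Set X)) ∧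
    ∀ a ∈ t, EMetric.diam a < ε}

/-- If the solution set S of SEP(f,g,C,Q) is nonempty and compact and H(S(ε),S) → 0 as
ε → 0⁺, then every generalized approximating sequence has a subsequence converging to
some element of S; in particular, SEP(f,g,C,Q) is Levitin–Polyak well-posed by
perturbations in the generalized sense. -/
theorem sep_gen_lp_wellposed_of_compact_hausdorff
    {E₁ E₂ N : Type*} [NormedAddCommGroup E₁] [NormedSpace ℝ E₁] [CompleteSpace E₁]
    [NormedAddCommGroup E₂] [NormedSpace ℝ E₂] [CompleteSpace E₂]
    [NormedAddCommGroup N] [NormedSpace ℝ N]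
    (C : Set E₁) (Q : Set E₂) (hCne : C.Nonempty) (hCcl : IsClosed C) (hCcv : Convex ℝ C)
    (hQne : Q.Nonempty) (hQcl : IsClosed Q) (hQcv : Convex ℝ Q)
    (A : E₁ →L[ℝ] E₂) (pstar : N) (r : ℝ) (hr : 0 < r)
    (ftil : N → E₁ → E₁ → ℝ) (gtil : N → E₂ → E₂ → ℝ)
    (hSne : (SEPSol C Q A (ftil pstar) (gtil pstar)).Nonempty)
    (hScomp : IsCompact (SEPSol C Q A (ftil pstar) (gtil pstar)))
    (hH : Tendsto (fun ε : ℝ => EMetric.hausdorffEdist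
        (approxSol C Q A pstar r ftil gtil ε) (SEPSol C Q A (ftil pstar) (gtil pstar)))
      (𝓝[>] (0 : ℝ)) (nhds 0)) :
    (∀ (p : ℕ → N) (u : ℕ → E₁ × E₂), GenApproxSeq C Q A pstar r ftil gtil p u →
      ∃ ustar ∈ SEPSol C Q A (ftil pstar) (gtil pstar), ∃ φ : ℕ → ℕ, StrictMono φ ∧
        Tendsto (u ∘ φ) atTop (nhds ustar)) ∧
    GenLPWellPosedPerturb C Q A pstar r ftil gtil := by
  have main : ∀ (p : ℕ → N) (u : ℕ → E₁ × E₂), GenApproxSeq C Q A pstar r ftil gtil p u →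
      ∃ ustar ∈ SEPSol C Q A (ftil pstar) (gtil pstar), ∃ φ : ℕ → ℕ, StrictMono φ ∧
        Tendsto (u ∘ φ) atTop (nhds ustar) := by
    intro p u hu
    obtain ⟨hpr, hpt, ε, hεpos, hεt, hub⟩ := hu
    set S := SEPSol C Q A (ftil pstar) (gtil pstar) with hS
    set δ : ℕ → ℝ := fun n => max (ε n) ‖p n - pstar‖ with hδ
    have hδpos : ∀ n, 0 < δ n := fun n => lt_max_of_lt_left (hεpos n)
    have hnorm : Tendsto (fun n => ‖p n - pstar‖) atTop (nhds 0) :=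
      tendsto_iff_norm_sub_tendsto_zero.mp hpt
    have hδt : Tendsto δ atTop (nhds 0) := by
      simpa using hεt.max hnorm
    have hδt' : Tendsto δ atTop (𝓝[>] (0:ℝ)) :=
      tendsto_nhdsWithin_of_tendsto_nhds_of_eventually_within _ hδt
        (Eventually.of_forall fun n => hδpos n)
    have hmem : ∀ n, u n ∈ approxSol C Q A pstar r ftil gtil (δ n) := by
      intro n
      obtain ⟨h1, h2, h3, h4, h5⟩ := hub n
      refine ⟨p n, hpr n, le_max_right _ _, h1.trans (le_max_left _ _),
        h2.trans (le_max_left _ _), h3.trans (le_max_left _ _), ?_, ?_⟩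
      · intro x hx
        exact le_trans (neg_le_neg (le_max_left (ε n) _)) (h4 x hx)
      · intro y hy
        exact le_trans (neg_le_neg (le_max_left (ε n) _)) (h5 y hy)
    have hHd : Tendsto (fun n => EMetric.hausdorffEdist
        (approxSol C Q A pstar r ftil gtil (δ n)) S) atTop (nhds 0) :=
      hH.comp hδt'
    have hinfE : Tendsto (fun n => EMetric.infEdist (u n) S) atTop (nhds 0) := by
      refine tendsto_of_tendsto_of_tendsto_of_le_of_le tendsto_const_nhds hHd
        (fun n => zero_le) (fun n => ?_)
      exact EMetric.infEdist_le_hausdorffEdist_of_mem (hmem n)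
    have hinf : Tendsto (fun n => infDist (u n) S) atTop (nhds 0) := by
      have := (ENNReal.tendsto_toReal (by simp)).comp hinfE
      exact this
    -- choose nearest points in S
    have hsel : ∀ n, ∃ s ∈ S, infDist (u n) S = dist (u n) s := fun n =>
      hScomp.exists_infDist_eq_dist hSne (u n)
    choose s hsS hsd using hsel
    obtain ⟨ustar, hustar, φ, hφ, hsφ⟩ := hScomp.tendsto_subseq hsS
    refine ⟨ustar, hustar, φ, hφ, ?_⟩
    have hdist : Tendsto (fun n => dist (u (φ n)) (s (φ n))) atTop (nhds 0) := by
      have := hinf.comp hφ.tendsto_atTop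
      simpa [Function.comp_def, hsd] using this
    rw [tendsto_iff_dist_tendsto_zero]
    have : Tendsto (fun n => dist (u (φ n)) (s (φ n)) + dist (s (φ n)) ustar)
        atTop (nhds 0) := by
      have h2 : Tendsto (fun n => dist (s (φ n)) ustar) atTop (nhds 0) :=
        tendsto_iff_dist_tendsto_zero.mp hsφ
      simpa using hdist.add h2
    refine squeeze_zero (fun n => dist_nonneg) (fun n => dist_triangle _ _ _) this
  exact ⟨main, hSne, main⟩
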